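/- (Proposition 9.) Suppose in addition that the density f is symmetric about its mean m, i.e. f(m + x) = f(m − x) for all x ∈ ℝ (so the median cost γ_μ equals m). Then the median voter receives a weakly higher payoff at the high reward r₁* = k₁(t)/ρ(δ,φ) than at the low reward r₀* = k₀(t)/ρ(δ,φ) — equivalently, m ≤ Θ(t) — if and only if m ≤ t. -/

import Mathlib

open MeasureTheory

/-- A cost distribution: a CDF `F` with continuously differentiable structure
given by a strictly positive, differentiable, log-concave density `f` with full
support on `ℝ`. -/
structure CostDist where
  F : ℝ → ℝ
  f : ℝ → ℝ
  deriv_eq : ∀ x : ℝ, HasDerivAt F (f x) x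
  f_pos : ∀ x : ℝ, 0 < f x
  f_diff : Differentiable ℝ f
  f_logConcave : ConcaveOn ℝ Set.univ fun x => Real.log (f x)
  tendsto_bot : Filter.Tendsto F Filter.atBot (nhds 0)
  tendsto_top : Filter.Tendsto F Filter.atTop (nhds 1)

/-- Expected responsiveness of the classifier `δ = (δ₁, δ₀)` at precision `φ`. -/
noncomputable def rho (d1 d0 phi : ℝ) : ℝ := (d1 + d0 - 1) * (2 * phi - 1)

/-- The designer's expected payoff `EU_D(δ | r)`. -/
noncomputable def EUD (D : CostDist) (phi A1 A0 B1 B0 r d1 d0 : ℝ) : ℝ :=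
  D.F (r * rho d1 d0 phi) *
      (phi * (A1 * d1 + A0 * (1 - d1)) + (1 - phi) * (A0 * d0 + A1 * (1 - d0))) +
    (1 - D.F (r * rho d1 d0 phi)) *
      (phi * (B1 * d0 + B0 * (1 - d0)) + (1 - phi) * (B0 * d1 + B1 * (1 - d1)))

/-- A voter's expected payoff conditional on complying, `EU₁(r | γ)`. -/
noncomputable def EU1 (D : CostDist) (phi t gamma d1 d0 r : ℝ) : ℝ :=
  -gamma + r * rho d1 d0 phi * (1 - D.F (r * rho d1 d0 phi)) + t * D.F (r * rho d1 d0 phi)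

/-- A voter's expected payoff conditional on not complying, `EU₀(r)`. -/
noncomputable def EU0 (D : CostDist) (phi t d1 d0 r : ℝ) : ℝ :=
  -(r * rho d1 d0 phi) * D.F (r * rho d1 d0 phi) + t * D.F (r * rho d1 d0 phi)

/-- A voter's overall payoff `V(r | γ) = max(EU₁(r | γ), EU₀(r))`. -/
noncomputable def V (D : CostDist) (phi t gamma d1 d0 r : ℝ) : ℝ :=
  max (EU1 D phi t gamma d1 d0 r) (EU0 D phi t d1 d0 r)

/-- Strict quasiconcavity of a real function on a set. -/
def StrictQuasiconcaveOn (s : Set ℝ) (g : ℝ → ℝ) : Prop :=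
  ∀ ⦃x⦄, x ∈ s → ∀ ⦃y⦄, y ∈ s → x ≠ y → ∀ ⦃a b : ℝ⦄, 0 < a → 0 < b → a + b = 1 →
    min (g x) (g y) < g (a * x + b * y)

/-- Strict quasiconvexity of a real function on a set. -/
def StrictQuasiconvexOn (s : Set ℝ) (g : ℝ → ℝ) : Prop :=
  ∀ ⦃x⦄, x ∈ s → ∀ ⦃y⦄, y ∈ s → x ≠ y → ∀ ⦃a b : ℝ⦄, 0 < a → 0 < b → a + b = 1 →
    g (a * x + b * y) < max (g x) (g y)

/-- `(r, δ)` is an equilibrium: `r` maximizes the median voter's payoff given `δ`,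
and `δ ∈ [0,1]²` maximizes the designer's payoff given `r`. -/
def IsEquilibrium (D : CostDist) (phi t A1 A0 B1 B0 gammaMu r d1 d0 : ℝ) : Prop :=
  d1 ∈ Set.Icc (0 : ℝ) 1 ∧ d0 ∈ Set.Icc (0 : ℝ) 1 ∧
  (∀ r' : ℝ, V D phi t gammaMu d1 d0 r' ≤ V D phi t gammaMu d1 d0 r) ∧
  (∀ e1 ∈ Set.Icc (0 : ℝ) 1, ∀ e0 ∈ Set.Icc (0 : ℝ) 1,
    EUD D phi A1 A0 B1 B0 r e1 e0 ≤ EUD D phi A1 A0 B1 B0 r d1 d0)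

namespace P9

open Filter

variable (D : CostDist)

lemma f_cont : Continuous D.f := D.f_diff.continuous

lemma F_diff : Differentiable ℝ D.F := fun x => (D.deriv_eq x).differentiableAt

lemma F_cont : Continuous D.F := (F_diff D).continuous

lemma F_deriv (x : ℝ) : deriv D.F x = D.f x := (D.deriv_eq x).deriv

lemma F_strictMono : StrictMono D.F :=
  strictMono_of_deriv_pos fun x => by rw [F_deriv]; exact D.f_pos x

lemma F_nonneg (x : ℝ) : 0 ≤ D.F x :=
  le_of_tendsto D.tendsto_bot
    (Filter.eventually_atBot.2 ⟨x, fun _ hy => (F_strictMono D).monotone hy⟩)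

lemma F_le_one (x : ℝ) : D.F x ≤ 1 :=
  ge_of_tendsto D.tendsto_top
    (Filter.eventually_atTop.2 ⟨x, fun _ hy => (F_strictMono D).monotone hy⟩)

lemma F_pos (x : ℝ) : 0 < D.F x :=
  lt_of_le_of_lt (F_nonneg D (x - 1)) (F_strictMono D (by linarith))

lemma F_lt_one (x : ℝ) : D.F x < 1 :=
  lt_of_lt_of_le (F_strictMono D (show x < x + 1 by linarith)) (F_le_one D (x + 1))

lemma F_sub (a b : ℝ) : D.F b - D.F a = ∫ x in a..b, D.f x :=
  (intervalIntegral.integral_eq_sub_of_hasDerivAt (fun x _ => D.deriv_eq x)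
    ((f_cont D).intervalIntegrable a b)).symm

lemma log_hasDeriv (y : ℝ) :
    HasDerivAt (fun z => Real.log (D.f z)) ((D.f y)⁻¹ * deriv D.f y) y :=
  (Real.hasDerivAt_log (ne_of_gt (D.f_pos y))).comp y
    ((D.f_diff y).hasDerivAt)

lemma tangent_bound (k x : ℝ) :
    D.f x ≤ D.f k * Real.exp ((D.f k)⁻¹ * deriv D.f k * (x - k)) := by
  set L : ℝ → ℝ := fun z => Real.log (D.f z) with hL
  set c : ℝ := (D.f k)⁻¹ * deriv D.f k with hc
  have hlim : Tendsto (fun y => (L y - L k) / (y - k)) (nhdsWithin k {k}ᶜ) (nhds c) := by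
    have := hasDerivAt_iff_tendsto_slope.1 (log_hasDeriv D k)
    exact this.congr (fun y => by rw [slope_def_field])
  have hslope : L x ≤ L k + c * (x - k) := by
    rcases lt_trichotomy x k with hxk | hxk | hxk
    · have hlim' : Tendsto (fun y => (L y - L k) / (y - k)) (nhdsWithin k (Set.Ioi k)) (nhds c) :=
        hlim.mono_left (nhdsWithin_mono _ (fun y hy => Set.mem_compl_singleton_iff.mpr (ne_of_gt (Set.mem_Ioi.mp hy))))
      have hev : ∀ᶠ y in nhdsWithin k (Set.Ioi k),
          (L y - L k) / (y - k) ≤ (L k - L x) / (k - x) := by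
        filter_upwards [self_mem_nhdsWithin] with y hy
        exact D.f_logConcave.slope_anti_adjacent (Set.mem_univ x) (Set.mem_univ y) hxk hy
      have h1 := le_of_tendsto hlim' hev
      rw [le_div_iff₀ (by linarith : (0:ℝ) < k - x)] at h1
      linarith
    · simp [hxk]
    · have hlim' : Tendsto (fun y => (L y - L k) / (y - k)) (nhdsWithin k (Set.Iio k)) (nhds c) :=
        hlim.mono_left (nhdsWithin_mono _ (fun y hy => Set.mem_compl_singleton_iff.mpr (ne_of_lt (Set.mem_Iio.mp hy))))
      have hev : ∀ᶠ y in nhdsWithin k (Set.Iio k),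
          (L x - L k) / (x - k) ≤ (L y - L k) / (y - k) := by
        filter_upwards [self_mem_nhdsWithin] with y hy
        have h2 := D.f_logConcave.slope_anti_adjacent (Set.mem_univ y) (Set.mem_univ x) hy hxk
        have h3 : (L y - L k) / (y - k) = (L k - L y) / (k - y) := by
          rw [← neg_div_neg_eq]; ring_nf
        rw [h3]; exact h2
      have h1 := ge_of_tendsto hlim' hev
      rw [div_le_iff₀ (by linarith : (0:ℝ) < x - k)] at h1
      linarith
  calc D.f x = Real.exp (L x) := (Real.exp_log (D.f_pos x)).symm
    _ ≤ Real.exp (L k + c * (x - k)) := Real.exp_le_exp.2 hslope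
    _ = D.f k * Real.exp (c * (x - k)) := by rw [Real.exp_add, Real.exp_log (D.f_pos k)]

lemma logconc_bound (k : ℝ) : D.F k * deriv D.f k ≤ (D.f k) ^ 2 := by
  by_cases hc : deriv D.f k ≤ 0
  · have := mul_nonpos_of_nonneg_of_nonpos (F_nonneg D k) hc
    nlinarith [D.f_pos k]
  · push_neg at hc
    set c : ℝ := (D.f k)⁻¹ * deriv D.f k with hcdef
    have hcpos : 0 < c := mul_pos (inv_pos.2 (D.f_pos k)) hc
    have key : ∀ y, y ≤ k → D.F k ≤ D.f k / c + D.F y := by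
      intro y hy
      have h1 : D.F k - D.F y = ∫ x in y..k, D.f x := F_sub D y k
      have hA : ∀ x : ℝ, HasDerivAt (fun z => D.f k / c * Real.exp (c * (z - k)))
          (D.f k * Real.exp (c * (x - k))) x := by
        intro x
        have h2 : HasDerivAt (fun z => c * (z - k)) c x := by
          simpa using ((hasDerivAt_id x).sub_const k).const_mul c
        have h3 := (h2.exp).const_mul (D.f k / c)
        have e : D.f k / c * (Real.exp (c * (x - k)) * c) = D.f k * Real.exp (c * (x - k)) := by
          rw [mul_comm (Real.exp _) c, ← mul_assoc, div_mul_cancel₀ _ (ne_of_gt hcpos)]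
        rwa [e] at h3
      have h4 : (∫ x in y..k, D.f k * Real.exp (c * (x - k)))
          = D.f k / c * Real.exp (c * (k - k)) - D.f k / c * Real.exp (c * (y - k)) :=
        intervalIntegral.integral_eq_sub_of_hasDerivAt (fun x _ => hA x)
          ((by continuity : Continuous fun x => D.f k * Real.exp (c * (x - k))).intervalIntegrable y k)
      have h5 : (∫ x in y..k, D.f x) ≤ ∫ x in y..k, D.f k * Real.exp (c * (x - k)) := by
        apply intervalIntegral.integral_mono_on hy ((f_cont D).intervalIntegrable y k)
          ((by continuity : Continuous fun x => D.f k * Real.exp (c * (x - k))).intervalIntegrable y k)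
        intro x _
        exact tangent_bound D k x
      have h6 : D.f k / c * Real.exp (c * (k - k)) - D.f k / c * Real.exp (c * (y - k))
          ≤ D.f k / c := by
        have := Real.exp_pos (c * (y - k))
        have hfc : 0 < D.f k / c := div_pos (D.f_pos k) hcpos
        simp only [sub_self, mul_zero, Real.exp_zero, mul_one]
        nlinarith
      linarith
    have hlim : Tendsto (fun y => D.f k / c + D.F y) atBot (nhds (D.f k / c + 0)) :=
      tendsto_const_nhds.add D.tendsto_bot
    have h7 : D.F k ≤ D.f k / c + 0 :=
      ge_of_tendsto hlim (Filter.eventually_atBot.2 ⟨k, fun y hy => key y hy⟩)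
    have h8 : deriv D.f k = c * D.f k := by
      rw [hcdef]; field_simp
      rw [div_self (ne_of_gt (D.f_pos k))]
    rw [h8]
    have h9 : D.F k ≤ D.f k / c := by linarith
    have h10 := D.f_pos k
    have : D.F k * c ≤ D.f k := by
      rw [div_eq_mul_inv] at h9
      calc D.F k * c ≤ D.f k * c⁻¹ * c := by nlinarith
        _ = D.f k := by field_simp
    nlinarith

lemma f_symm (m : ℝ) (hsym : ∀ x : ℝ, D.f (m + x) = D.f (m - x)) (x : ℝ) :
    D.f (2 * m - x) = D.f x := by
  have h := hsym (x - m)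
  rw [show m + (x - m) = x by ring, show m - (x - m) = 2 * m - x by ring] at h
  exact h.symm

lemma F_symm (m : ℝ) (hsym : ∀ x : ℝ, D.f (m + x) = D.f (m - x)) (x : ℝ) :
    D.F x + D.F (2 * m - x) = 1 := by
  set g : ℝ → ℝ := fun y => D.F (m + y) + D.F (m - y) with hg
  have hder : ∀ y, HasDerivAt g 0 y := by
    intro y
    have h1 : HasDerivAt (fun y : ℝ => D.F (m + y)) (D.f (m + y) * 1) y :=
      (D.deriv_eq (m + y)).comp y (((hasDerivAt_id y).const_add m))
    have h2 : HasDerivAt (fun y : ℝ => D.F (m - y)) (D.f (m - y) * (-1)) y :=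
      (D.deriv_eq (m - y)).comp y (((hasDerivAt_id y).neg.const_add m))
    have h3 := h1.add h2
    have h4 : D.f (m + y) * 1 + D.f (m - y) * (-1) = 0 := by rw [hsym y]; ring
    rwa [h4] at h3
  have hconst : ∀ y z : ℝ, g y = g z := by
    intro y z
    exact is_const_of_deriv_eq_zero (fun w => (hder w).differentiableAt) (fun w => (hder w).deriv) y z
  have hlim : Tendsto g atTop (nhds 1) := by
    have h1 : Tendsto (fun y : ℝ => D.F (m + y)) atTop (nhds 1) :=
      D.tendsto_top.comp (tendsto_atTop_add_const_left _ m tendsto_id)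
    have h2 : Tendsto (fun y : ℝ => D.F (m - y)) atTop (nhds 0) :=
      D.tendsto_bot.comp (by
        have := tendsto_atBot_add_const_left atTop m tendsto_neg_atTop_atBot
        exact Tendsto.congr (fun x => (sub_eq_add_neg m x).symm) this)
    simpa using h1.add h2
  have hgx : g = fun _ => g (x - m) := funext fun y => hconst y (x - m)
  have hlim2 : Tendsto g atTop (nhds (g (x - m))) := by rw [hgx]; exact tendsto_const_nhds
  have := tendsto_nhds_unique hlim2 hlim
  rw [hg] at this
  simp only at this
  rw [show m + (x - m) = x by ring, show m - (x - m) = 2 * m - x by ring] at this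
  exact this


noncomputable def vv (D : CostDist) (k : ℝ) : ℝ := D.F k / D.f k

noncomputable def vdd (D : CostDist) (k : ℝ) : ℝ :=
  (D.f k * D.f k - D.F k * deriv D.f k) / (D.f k) ^ 2

lemma vv_hasDeriv (k : ℝ) : HasDerivAt (vv D) (vdd D k) k :=
  (D.deriv_eq k).div ((D.f_diff k).hasDerivAt) (ne_of_gt (D.f_pos k))

lemma vdd_nonneg (k : ℝ) : 0 ≤ vdd D k :=
  div_nonneg (by nlinarith [logconc_bound D k]) (sq_nonneg _)

lemma vv_pos (k : ℝ) : 0 < vv D k := div_pos (F_pos D k) (D.f_pos k)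

noncomputable def phiF (D : CostDist) (k : ℝ) : ℝ := k + vv D k

lemma phi_hasDeriv (k : ℝ) : HasDerivAt (phiF D) (1 + vdd D k) k :=
  (hasDerivAt_id k).add (vv_hasDeriv D k)

lemma phi_deriv_pos (k : ℝ) : 0 < 1 + vdd D k := by linarith [vdd_nonneg D k]

lemma phi_strictMono : StrictMono (phiF D) :=
  strictMono_of_deriv_pos fun k => by
    rw [(phi_hasDeriv D k).deriv]; exact phi_deriv_pos D k

lemma vv_mono : Monotone (vv D) :=
  monotone_of_deriv_nonneg (fun k => (vv_hasDeriv D k).differentiableAt)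
    (fun k => by rw [(vv_hasDeriv D k).deriv]; exact vdd_nonneg D k)

lemma phi_cont : Continuous (phiF D) :=
  Differentiable.continuous fun k => (phi_hasDeriv D k).differentiableAt

lemma phi_surj : Function.Surjective (phiF D) := by
  apply (phi_cont D).surjective
  · exact tendsto_atTop_mono (fun k => le_add_of_nonneg_right (le_of_lt (vv_pos D k))) tendsto_id
  · apply tendsto_atBot_mono' atBot _ (tendsto_atBot_add_const_right atBot (vv D 0) tendsto_id)
    filter_upwards [Filter.eventually_le_atBot (0 : ℝ)] with k hk
    exact add_le_add (le_refl k) (vv_mono D hk)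

noncomputable def psiF (D : CostDist) (τ : ℝ) : ℝ :=
  ((phi_strictMono D).orderIsoOfSurjective _ (phi_surj D)).symm τ

lemma psi_cont : Continuous (psiF D) :=
  OrderIso.continuous _

lemma phi_psi (τ : ℝ) : phiF D (psiF D τ) = τ :=
  StrictMono.orderIsoOfSurjective_self_symm_apply _ _ _ _

lemma psi_phi (k : ℝ) : psiF D (phiF D k) = k :=
  StrictMono.orderIsoOfSurjective_symm_apply_self _ _ _ _

lemma psi_hasDeriv (τ : ℝ) : HasDerivAt (psiF D) ((1 + vdd D (psiF D τ))⁻¹) τ :=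
  HasDerivAt.of_local_left_inverse ((psi_cont D).continuousAt)
    (phi_hasDeriv D (psiF D τ)) (ne_of_gt (phi_deriv_pos D _))
    (Filter.Eventually.of_forall (phi_psi D))

noncomputable def wF (D : CostDist) (k : ℝ) : ℝ := D.F k * vv D k

lemma wF_hasDeriv (k : ℝ) : HasDerivAt (wF D) (D.F k * (1 + vdd D k)) k := by
  have h := (D.deriv_eq k).mul (vv_hasDeriv D k)
  have h2 : D.f k * vv D k + D.F k * vdd D k = D.F k * (1 + vdd D k) := by
    have hf := ne_of_gt (D.f_pos k)
    unfold vv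
    field_simp
  rw [← h2]
  exact h

noncomputable def GF (D : CostDist) (τ : ℝ) : ℝ := wF D (psiF D τ) - τ / 2

lemma GF_hasDeriv (τ : ℝ) : HasDerivAt (GF D) (D.F (psiF D τ) - 1 / 2) τ := by
  have h1 := (wF_hasDeriv D (psiF D τ)).comp τ (psi_hasDeriv D τ)
  have h2 : HasDerivAt (fun s : ℝ => s / 2) (1 / 2 : ℝ) τ := by
    simpa using (hasDerivAt_id τ).div_const 2
  have h3 := h1.sub h2
  have h4 : D.F (psiF D τ) * (1 + vdd D (psiF D τ)) * (1 + vdd D (psiF D τ))⁻¹ - 1 / 2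
      = D.F (psiF D τ) - 1 / 2 := by
    rw [mul_assoc, mul_inv_cancel₀ (ne_of_gt (phi_deriv_pos D _)), mul_one]
  rwa [h4] at h3


lemma theta_key (m t k0v k1v : ℝ)
    (hsym : ∀ x : ℝ, D.f (m + x) = D.f (m - x))
    (hk1 : k1v = t + (1 - D.F k1v) / D.f k1v)
    (hk0 : k0v = t - D.F k0v / D.f k0v) :
    (m < t → m < k0v * D.F k0v + k1v * (1 - D.F k1v) + t * (D.F k1v - D.F k0v)) ∧
    (m = t → k0v * D.F k0v + k1v * (1 - D.F k1v) + t * (D.F k1v - D.F k0v) = m) ∧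
    (t < m → k0v * D.F k0v + k1v * (1 - D.F k1v) + t * (D.F k1v - D.F k0v) < m) := by
  set q : ℝ → ℝ := fun τ => D.F (psiF D τ) with hq
  have q_cont : Continuous q := (F_cont D).comp (psi_cont D)
  have q_cont2 : Continuous (fun s : ℝ => q (2*m - s)) :=
    q_cont.comp (continuous_const.sub continuous_id)
  have hii : ∀ a b : ℝ, IntervalIntegrable (fun τ => q τ - 1/2) volume a b :=
    fun a b => (q_cont.sub continuous_const).intervalIntegrable a b
  have hii2 : IntervalIntegrable (fun s => q (2*m - s) - 1/2) volume m t :=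
    (q_cont2.sub continuous_const).intervalIntegrable m t
  have hFTC : ∫ τ in (2*m - t)..t, (q τ - 1/2) = GF D t - GF D (2*m - t) :=
    intervalIntegral.integral_eq_sub_of_hasDerivAt (fun τ _ => GF_hasDeriv D τ)
      (hii _ _)
  have hsplit : (∫ τ in (2*m - t)..m, (q τ - 1/2)) + ∫ τ in m..t, (q τ - 1/2)
      = ∫ τ in (2*m - t)..t, (q τ - 1/2) :=
    intervalIntegral.integral_add_adjacent_intervals (hii _ _) (hii _ _)
  have hrefl : (∫ s in m..t, (q (2*m - s) - 1/2)) = ∫ τ in (2*m - t)..m, (q τ - 1/2) := by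
    have h := intervalIntegral.integral_comp_sub_left (a := m) (b := t)
      (fun τ => q τ - 1/2) (2*m)
    rw [show 2*m - m = m by ring] at h
    exact h
  have hcomb : GF D t - GF D (2*m - t) = ∫ s in m..t, (q s + q (2*m - s) - 1) := by
    rw [← hFTC, ← hsplit, ← hrefl, ← intervalIntegral.integral_add hii2 (hii m t)]
    apply intervalIntegral.integral_congr
    intro s _
    ring
  have hpt : ∀ s : ℝ, q s + q (2*m - s) - 1 < 0 := by
    intro s
    have h1 := phi_psi D s
    have h2 := phi_psi D (2*m - s)
    unfold phiF at h1 h2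
    have hlt : psiF D (2*m - s) < 2*m - psiF D s := by
      nlinarith [vv_pos D (psiF D s), vv_pos D (psiF D (2*m - s))]
    have h3 : D.F (psiF D (2*m - s)) < D.F (2*m - psiF D s) := F_strictMono D hlt
    have h4 : D.F (psiF D s) + D.F (2*m - psiF D s) = 1 := F_symm D m hsym (psiF D s)
    simp only [hq]
    linarith
  have sign1 : m < t → GF D t - GF D (2*m - t) < 0 := by
    intro hmt
    rw [hcomb]
    have hpos : 0 < ∫ s in m..t, (1 - q s - q (2*m - s)) := by
      apply intervalIntegral.intervalIntegral_pos_of_pos_on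
        (((continuous_const.sub q_cont).sub q_cont2).intervalIntegrable m t)
        (fun s _ => by show (0:ℝ) < 1 - q s - q (2*m - s); linarith [hpt s]) hmt
    have heq : (∫ s in m..t, (1 - q s - q (2*m - s)))
        = -∫ s in m..t, (q s + q (2*m - s) - 1) := by
      rw [← intervalIntegral.integral_neg]
      apply intervalIntegral.integral_congr
      intro s _
      ring
    rw [heq] at hpos
    linarith
  have sign2 : m = t → GF D t - GF D (2*m - t) = 0 := by
    intro hmt
    rw [hcomb, hmt, intervalIntegral.integral_same]
  have sign3 : t < m → 0 < GF D t - GF D (2*m - t) := by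
    intro htm
    rw [hcomb]
    have hpos : 0 < ∫ s in t..m, (1 - q s - q (2*m - s)) := by
      apply intervalIntegral.intervalIntegral_pos_of_pos_on
        (((continuous_const.sub q_cont).sub q_cont2).intervalIntegrable t m)
        (fun s _ => by show (0:ℝ) < 1 - q s - q (2*m - s); linarith [hpt s]) htm
    have e1 : (∫ s in t..m, (1 - q s - q (2*m - s)))
        = ∫ s in t..m, -(q s + q (2*m - s) - 1) :=
      intervalIntegral.integral_congr (fun s _ => by ring)
    rw [e1, intervalIntegral.integral_neg, ← intervalIntegral.integral_symm] at hpos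
    linarith
  -- identify the endpoint values of GF
  have hψt : psiF D t = k0v := by
    have h : phiF D k0v = t := by
      unfold phiF vv
      linarith [hk0]
    rw [← h, psi_phi]
  have hψa : psiF D (2*m - t) = 2*m - k1v := by
    have h : phiF D (2*m - k1v) = 2*m - t := by
      unfold phiF vv
      have hF : D.F (2*m - k1v) = 1 - D.F k1v := by linarith [F_symm D m hsym k1v]
      have hff : D.f (2*m - k1v) = D.f k1v := f_symm D m hsym k1v
      rw [hF, hff]
      linarith [hk1]
    rw [← h, psi_phi]
  have hF2 : D.F (2*m - k1v) = 1 - D.F k1v := by linarith [F_symm D m hsym k1v]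
  have hf2 : D.f (2*m - k1v) = D.f k1v := f_symm D m hsym k1v
  have hGdiff : GF D t - GF D (2*m - t)
      = D.F k0v * (D.F k0v / D.f k0v)
        - (1 - D.F k1v) * ((1 - D.F k1v) / D.f k1v) - (t - m) := by
    unfold GF wF vv
    rw [hψt, hψa, hF2, hf2]
    ring
  have hTheta : k0v * D.F k0v + k1v * (1 - D.F k1v) + t * (D.F k1v - D.F k0v) - m
      = -(GF D t - GF D (2*m - t)) := by
    rw [hGdiff]
    linear_combination D.F k0v * hk0 + (1 - D.F k1v) * hk1
  refine ⟨fun h => ?_, fun h => ?_, fun h => ?_⟩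
  · have := sign1 h; linarith
  · have := sign2 h; linarith
  · have := sign3 h; linarith


end P9

/-- **Proposition 9.** If the density is symmetric about its mean `m` (so the median cost
is `m`), then the median voter weakly prefers the high reward `r₁*` to the low reward
`r₀*` — equivalently `m ≤ Θ(t)` — if and only if `m ≤ t`. -/
theorem prop9 (D : CostDist) (m t k0v k1v : ℝ) (ht : 0 ≤ t)
    (hsym : ∀ x : ℝ, D.f (m + x) = D.f (m - x))
    (hk1 : k1v = t + (1 - D.F k1v) / D.f k1v)
    (hk0 : k0v = t - D.F k0v / D.f k0v) :
    (m ≤ k0v * D.F k0v + k1v * (1 - D.F k1v) + t * (D.F k1v - D.F k0v) ↔ m ≤ t) ∧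
    (∀ phi ∈ Set.Ioc (1 / 2 : ℝ) 1, ∀ d1 ∈ Set.Icc (0 : ℝ) 1, ∀ d0 ∈ Set.Icc (0 : ℝ) 1,
      rho d1 d0 phi ≠ 0 →
        (V D phi t m d1 d0 (k0v / rho d1 d0 phi) ≤
            V D phi t m d1 d0 (k1v / rho d1 d0 phi) ↔ m ≤ t)) := by
  obtain ⟨s1, s2, s3⟩ := P9.theta_key D m t k0v k1v hsym hk1 hk0
  have hf0 := D.f_pos k0v
  have hf1 := D.f_pos k1v
  have hF0pos := P9.F_pos D k0v
  have hF0lt := P9.F_lt_one D k0v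
  have hF1pos := P9.F_pos D k1v
  have hF1lt := P9.F_lt_one D k1v
  have h1 : t - k0v = D.F k0v / D.f k0v := by linarith
  have h2 : k1v - t = (1 - D.F k1v) / D.f k1v := by linarith
  have h3 : 0 < t - k0v := by rw [h1]; exact div_pos hF0pos hf0
  have h4 : 0 < k1v - t := by rw [h2]; exact div_pos (by linarith) hf1
  have hle : m ≤ t → m ≤ k0v * D.F k0v + k1v * (1 - D.F k1v) + t * (D.F k1v - D.F k0v) := by
    intro h
    rcases eq_or_lt_of_le h with he | hlt
    · exact le_of_eq (s2 he).symm
    · exact le_of_lt (s1 hlt)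
  constructor
  · constructor
    · intro hΘ
      by_contra hmt
      push_neg at hmt
      exact absurd hΘ (not_le.2 (s3 hmt))
    · exact hle
  · intro phi _ d1 _ d0 _ hrho
    have hmul0 : k0v / rho d1 d0 phi * rho d1 d0 phi = k0v := div_mul_cancel₀ _ hrho
    have hmul1 : k1v / rho d1 d0 phi * rho d1 d0 phi = k1v := div_mul_cancel₀ _ hrho
    have e0 : V D phi t m d1 d0 (k0v / rho d1 d0 phi)
        = max (-m + k0v * (1 - D.F k0v) + t * D.F k0v) (-k0v * D.F k0v + t * D.F k0v) := by
      unfold V EU1 EU0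
      rw [hmul0]
    have e1 : V D phi t m d1 d0 (k1v / rho d1 d0 phi)
        = max (-m + k1v * (1 - D.F k1v) + t * D.F k1v) (-k1v * D.F k1v + t * D.F k1v) := by
      unfold V EU1 EU0
      rw [hmul1]
    rw [e0, e1]
    have hΘk0 : k0v < k0v * D.F k0v + k1v * (1 - D.F k1v) + t * (D.F k1v - D.F k0v) := by
      have hp1 : 0 < (t - k0v) * (1 - D.F k0v) := mul_pos h3 (by linarith)
      have hp2 : 0 < (k1v - t) * (1 - D.F k1v) := mul_pos h4 (by linarith)
      nlinarith
    constructor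
    · intro hV
      by_contra hmt
      push_neg at hmt
      have hΘm := s3 hmt
      have c1 : -m + k1v * (1 - D.F k1v) + t * D.F k1v < -k0v * D.F k0v + t * D.F k0v := by
        linarith
      have c2 : -k1v * D.F k1v + t * D.F k1v < -k0v * D.F k0v + t * D.F k0v := by
        nlinarith [mul_pos h4 hF1pos, mul_pos h3 hF0pos]
      have hlt : max (-m + k1v * (1 - D.F k1v) + t * D.F k1v) (-k1v * D.F k1v + t * D.F k1v)
          < max (-m + k0v * (1 - D.F k0v) + t * D.F k0v) (-k0v * D.F k0v + t * D.F k0v) :=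
        lt_of_lt_of_le (max_lt c1 c2) (le_max_right _ _)
      exact absurd hV (not_le.2 hlt)
    · intro hmt
      have hΘm := hle hmt
      have c1 : -m + k0v * (1 - D.F k0v) + t * D.F k0v
          ≤ -m + k1v * (1 - D.F k1v) + t * D.F k1v := by linarith
      have c2 : -k0v * D.F k0v + t * D.F k0v
          ≤ -m + k1v * (1 - D.F k1v) + t * D.F k1v := by linarith
      calc max (-m + k0v * (1 - D.F k0v) + t * D.F k0v) (-k0v * D.F k0v + t * D.F k0v)
          ≤ -m + k1v * (1 - D.F k1v) + t * D.F k1v := max_le c1 c2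
        _ ≤ max (-m + k1v * (1 - D.F k1v) + t * D.F k1v) (-k1v * D.F k1v + t * D.F k1v) :=
            le_max_left _ _
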